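/- (Prime avoidance for k-ideals) Let R be a commutative semiring, let I be a nonempty subset of R closed under addition and multiplication, and let P_1, ..., P_n be k-ideals of R such that P_3, ..., P_n are k-prime. If I is not contained in P_j for every j = 1, ..., n, then there exists x ∈ I such that x ∉ P_j for all j. -/

import Mathlib

variable {R : Type*} [CommSemiring R]

/-- An ideal `I` of a commutative semiring is a *k-ideal* (subtractive ideal) if
`a ∈ I` and `a + b ∈ I` imply `b ∈ I`. -/
def IsKIdeal (I : Ideal R) : Prop :=
  ∀ a b : R, a ∈ I → a + b ∈ I → b ∈ I

/-- A *k-prime* ideal: a proper k-ideal `P` such that for all k-ideals `I`, `J`,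
`I * J ≤ P` implies `I ≤ P` or `J ≤ P`. -/
def IsKPrime (P : Ideal R) : Prop :=
  IsKIdeal P ∧ P ≠ ⊤ ∧
    ∀ I J : Ideal R, IsKIdeal I → IsKIdeal J → I * J ≤ P → I ≤ P ∨ J ≤ P

/-- k-closure of the principal ideal on `a`. -/
def kcl (a : R) : Ideal R where
  carrier := {x | ∃ r s : R, x + r * a = s * a}
  zero_mem' := ⟨0, 0, by simp⟩
  add_mem' := by
    rintro x y ⟨r, s, h⟩ ⟨r', s', h'⟩
    exact ⟨r + r', s + s', by rw [add_mul, add_mul, ← h, ← h']; ring⟩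
  smul_mem' := by
    rintro c x ⟨r, s, h⟩
    refine ⟨c * r, c * s, ?_⟩
    simp only [smul_eq_mul]
    rw [mul_assoc, mul_assoc, ← h]; ring

lemma mem_kcl_self (a : R) : a ∈ kcl a := ⟨0, 1, by ring⟩

lemma isKIdeal_kcl (a : R) : IsKIdeal (kcl a) := by
  rintro x y ⟨r, s, h⟩ ⟨r', s', h'⟩
  refine ⟨r' + s, s' + r, ?_⟩
  have : y + (r' + s) * a = (x + y + r' * a) + r * a := by rw [add_mul, ← h]; ring
  rw [this, h', add_mul]

lemma kprime_elem {P : Ideal R} (hP : IsKPrime P) {a b : R} (hab : a * b ∈ P) :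
    a ∈ P ∨ b ∈ P := by
  have hle : kcl a * kcl b ≤ P := by
    rw [Ideal.mul_le]
    rintro x ⟨r, s, h⟩ y ⟨r', s', h'⟩
    -- x*b ∈ P
    have hxb : x * b ∈ P := by
      have h1 : r * (a * b) + x * b = s * (a * b) := by
        have := congrArg (· * b) h
        calc r * (a * b) + x * b = (x + r * a) * b := by ring
          _ = s * a * b := by rw [h]
          _ = s * (a * b) := by ring
      exact hP.1 _ _ (P.mul_mem_left r hab) (h1 ▸ P.mul_mem_left s hab)
    have hay : a * y ∈ P := by
      have h1 : r' * (a * b) + a * y = s' * (a * b) := by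
        calc r' * (a * b) + a * y = a * (y + r' * b) := by ring
          _ = a * (s' * b) := by rw [h']
          _ = s' * (a * b) := by ring
      exact hP.1 _ _ (P.mul_mem_left r' hab) (h1 ▸ P.mul_mem_left s' hab)
    have hw : r' * (x * b) + r * (a * y) + (r * r') * (a * b) ∈ P :=
      P.add_mem (P.add_mem (P.mul_mem_left _ hxb) (P.mul_mem_left _ hay))
        (P.mul_mem_left _ hab)
    have h2 : (r' * (x * b) + r * (a * y) + (r * r') * (a * b)) + x * y
        = (s * s') * (a * b) := by
      calc (r' * (x * b) + r * (a * y) + (r * r') * (a * b)) + x * y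
          = (x + r * a) * (y + r' * b) := by ring
        _ = (s * a) * (s' * b) := by rw [h, h']
        _ = (s * s') * (a * b) := by ring
    exact hP.1 _ _ hw (h2 ▸ P.mul_mem_left _ hab)
  rcases hP.2.2 _ _ (isKIdeal_kcl a) (isKIdeal_kcl b) hle with h | h
  · exact Or.inl (h (mem_kcl_self a))
  · exact Or.inr (h (mem_kcl_self b))

lemma prod_mem_of_prime {P : Ideal R} (h1 : (1 : R) ∉ P)
    (hp : ∀ a b : R, a * b ∈ P → a ∈ P ∨ b ∈ P)
    {ι : Type*} (t : Finset ι) (f : ι → R) (h : ∏ i ∈ t, f i ∈ P) :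
    ∃ i ∈ t, f i ∈ P := by
  induction t using Finset.cons_induction with
  | empty => simp only [Finset.prod_empty] at h; exact absurd h h1
  | cons a t ha ih =>
    rw [Finset.prod_cons] at h
    rcases hp _ _ h with h | h
    · exact ⟨a, Finset.mem_cons_self a t, h⟩
    · obtain ⟨i, hi, hfi⟩ := ih h
      exact ⟨i, Finset.mem_cons_of_mem hi, hfi⟩

lemma prod_mem_S {S : Set R} (hmul : ∀ a ∈ S, ∀ b ∈ S, a * b ∈ S) :
    ∀ (m : ℕ) (f : Fin (m + 1) → R), (∀ i, f i ∈ S) → ∏ i, f i ∈ S := by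
  intro m
  induction m with
  | zero => intro f hf; simpa using hf 0
  | succ m ih =>
    intro f hf
    rw [Fin.prod_univ_succ]
    exact hmul _ (hf 0) _ (ih (fun i => f i.succ) (fun i => hf i.succ))

/-- Prime avoidance for k-ideals: if `S` is a nonempty subset of `R` closed under
addition and multiplication, and `P 0, …, P (n-1)` are k-ideals, all but possibly the
first two of which are k-prime, and `S` is not contained in any `P i`, then there is
`x ∈ S` avoiding every `P i`. -/
theorem kPrime_avoidance (n : ℕ) (S : Set R) (hS : S.Nonempty)
    (hadd : ∀ a ∈ S, ∀ b ∈ S, a + b ∈ S) (hmul : ∀ a ∈ S, ∀ b ∈ S, a * b ∈ S)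
    (P : Fin n → Ideal R) (hk : ∀ i, IsKIdeal (P i))
    (hprime : ∀ i : Fin n, 2 ≤ (i : ℕ) → IsKPrime (P i))
    (hns : ∀ i, ¬ S ⊆ (P i : Set R)) :
    ∃ x ∈ S, ∀ i, x ∉ P i := by
  induction n with
  | zero => exact ⟨hS.choose, hS.choose_spec, fun i => i.elim0⟩
  | succ n ih =>
    -- for each j, choose x j ∈ S avoiding all P i with i ≠ j
    have hx : ∀ j : Fin (n + 1), ∃ x ∈ S, ∀ i : Fin (n + 1), i ≠ j → x ∉ P i := by
      intro j
      obtain ⟨x, hxS, hxP⟩ := ih (fun i => P (j.succAbove i)) (fun i => hk _)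
        (fun i hi => hprime _ (le_trans hi (by unfold Fin.succAbove; split <;> simp)))
        (fun i => hns _)
      refine ⟨x, hxS, fun i hij => ?_⟩
      obtain ⟨k, rfl⟩ := Fin.exists_succAbove_eq hij
      exact hxP k
    choose x hxS hxP using hx
    by_cases hex : ∃ j, x j ∉ P j
    · obtain ⟨j, hj⟩ := hex
      exact ⟨x j, hxS j, fun i => if h : i = j then h ▸ hj else hxP j i h⟩
    push_neg at hex
    -- now x j ∈ P j for every j
    rcases n with _ | m
    · obtain ⟨y, hyS, hyP⟩ := Set.not_subset.mp (hns 0)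
      exact ⟨y, hyS, fun i => by rw [show i = 0 from Fin.ext (by omega)]; exact hyP⟩
    · set L : Fin (m + 2) := Fin.last (m + 1) with hL
      set f : Fin (m + 1) → R := fun i => x i.castSucc with hf
      set z : R := ∏ i, f i with hz
      have hzS : z ∈ S := prod_mem_S hmul m f (fun i => hxS _)
      have hzPj : ∀ j : Fin (m + 2), j ≠ L → z ∈ P j := by
        intro j hj
        have hlt : (j : ℕ) < m + 1 := by
          have := j.isLt
          have : (j : ℕ) ≠ m + 1 := fun h => hj (Fin.ext h)
          omega
        have hcast : (⟨(j : ℕ), hlt⟩ : Fin (m + 1)).castSucc = j := Fin.ext rfl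
        rw [hz, Finset.prod_eq_prod_diff_singleton_mul
          (Finset.mem_univ (⟨(j : ℕ), hlt⟩ : Fin (m + 1))) f]
        exact Ideal.mul_mem_left _ _ (by rw [hf]; simpa [hcast] using hex j)
      have hfac : ∀ i : Fin (m + 1), f i ∉ P L := fun i =>
        hxP i.castSucc L (by simp only [hL, Fin.ne_iff_vne, Fin.val_last,
          Fin.coe_castSucc]; omega)
      have hzL : z ∉ P L := by
        rcases Nat.eq_zero_or_pos m with rfl | hm
        · simpa [hz, Fin.prod_univ_one] using hfac 0
        · intro hzmem
          have h1 : (1 : R) ∉ P L := by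
            intro h1
            have htop : P L = ⊤ := (Ideal.eq_top_iff_one _).mpr h1
            exact hns L (by intro s _; rw [htop]; trivial)
          have hP' := hprime L (by simp only [hL, Fin.val_last]; omega)
          obtain ⟨i, _, hi⟩ := prod_mem_of_prime h1 (fun a b => kprime_elem hP')
            Finset.univ f hzmem
          exact hfac i hi
      refine ⟨x L + z, hadd _ (hxS L) _ hzS, fun i => ?_⟩
      by_cases hi : i = L
      · subst hi
        intro hy
        exact hzL (hk L (x L) z (hex L) hy)
      · intro hy
        exact hxP L i hi (hk i z (x L) (hzPj i hi) (by rw [add_comm]; exact hy))
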